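/- Let b, c : ℝ → ℝ be smooth, let m₁, m₂, m₃ ∈ ℝ satisfy m₁ = m₃² − m₂², define m(y) = m₁·y + m₂·B(y) + m₃·C(y), and set Q(t,x) = exp(m₂t + m₃x). Then for every smooth function u : ℝ² → ℝ (not necessarily a solution), the current generated by the time-translation characteristic p = −∂ₜu and the adjoint-symmetry Q, namely Ψᵗ = −Q·∂ₜ²u − (b(u) − m₂)·Q·∂ₜu and Ψˣ = Q·∂ₜ∂ₓu − (c(u) + m₃)·Q·∂ₜu, satisfies ∂ₜ(Ψᵗ + Q·F[u]) + ∂ₓΨˣ = m₂·Q·F[u] on ℝ². (Thus the multiplier of this symmetry-generated conservation law is ∂ₜQ = m₂·Q.) -/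

import Mathlib

noncomputable section

open Real

/-- Partial derivative in the first (time) variable. -/
def Dt (u : ℝ → ℝ → ℝ) : ℝ → ℝ → ℝ := fun t x => deriv (fun s => u s x) t

/-- Partial derivative in the second (space) variable. -/
def Dx (u : ℝ → ℝ → ℝ) : ℝ → ℝ → ℝ := fun t x => deriv (fun s => u t s) x

/-- Smoothness (C^∞) of a function of two real variables. -/
def Smooth2 (u : ℝ → ℝ → ℝ) : Prop := ContDiff ℝ (⊤ : ℕ∞) (fun p : ℝ × ℝ => u p.1 p.2)
/-- The semilinear wave operator F[u] = ∂ₜ²u − ∂ₓ²u + b(u)∂ₜu + c(u)∂ₓu + m(u). -/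
def Fop (b c m : ℝ → ℝ) (u : ℝ → ℝ → ℝ) : ℝ → ℝ → ℝ := fun t x =>
  Dt (Dt u) t x - Dx (Dx u) t x + b (u t x) * Dt u t x + c (u t x) * Dx u t x + m (u t x)

/-- The adjoint linearized operator along u:
L*[u]q = ∂ₜ²q − ∂ₓ²q − b(u)∂ₜq − c(u)∂ₓq + m′(u)q. -/
def Lstar (b c m : ℝ → ℝ) (u q : ℝ → ℝ → ℝ) : ℝ → ℝ → ℝ := fun t x =>
  Dt (Dt q) t x - Dx (Dx q) t x - b (u t x) * Dt q t x - c (u t x) * Dx q t x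
    + deriv m (u t x) * q t x

namespace Smooth2

variable {u : ℝ → ℝ → ℝ}

lemma fst (hu : Smooth2 u) (x : ℝ) : ContDiff ℝ (⊤ : ℕ∞) (fun t => u t x) :=
  hu.comp (contDiff_id.prodMk contDiff_const)

lemma snd (hu : Smooth2 u) (t : ℝ) : ContDiff ℝ (⊤ : ℕ∞) (fun x => u t x) :=
  hu.comp (contDiff_const.prodMk contDiff_id)

lemma hasDerivAt_t (hu : Smooth2 u) (t x : ℝ) :
    HasDerivAt (fun s => u s x) (Dt u t x) t :=
  ((hu.fst x).differentiable (by simp) t).hasDerivAt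

lemma hasDerivAt_x (hu : Smooth2 u) (t x : ℝ) :
    HasDerivAt (fun s => u t s) (Dx u t x) x :=
  ((hu.snd t).differentiable (by simp) x).hasDerivAt

lemma Dt_eq_fderiv (hu : Smooth2 u) (t x : ℝ) :
    Dt u t x = fderiv ℝ (fun p : ℝ × ℝ => u p.1 p.2) (t, x) (1, 0) := by
  have h1 : HasFDerivAt (fun p : ℝ × ℝ => u p.1 p.2)
      (fderiv ℝ (fun p : ℝ × ℝ => u p.1 p.2) (t, x)) (t, x) :=
    (hu.differentiable (by simp) (t, x)).hasFDerivAt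
  have h2 : HasDerivAt (fun s : ℝ => ((s, x) : ℝ × ℝ)) ((1 : ℝ), (0 : ℝ)) t :=
    (hasDerivAt_id t).prodMk (hasDerivAt_const t x)
  exact (h1.comp_hasDerivAt t h2).deriv.symm ▸ rfl

lemma Dx_eq_fderiv (hu : Smooth2 u) (t x : ℝ) :
    Dx u t x = fderiv ℝ (fun p : ℝ × ℝ => u p.1 p.2) (t, x) (0, 1) := by
  have h1 : HasFDerivAt (fun p : ℝ × ℝ => u p.1 p.2)
      (fderiv ℝ (fun p : ℝ × ℝ => u p.1 p.2) (t, x)) (t, x) :=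
    (hu.differentiable (by simp) (t, x)).hasFDerivAt
  have h2 : HasDerivAt (fun s : ℝ => ((t, s) : ℝ × ℝ)) ((0 : ℝ), (1 : ℝ)) x :=
    (hasDerivAt_const x t).prodMk (hasDerivAt_id x)
  exact (h1.comp_hasDerivAt x h2).deriv.symm ▸ rfl

lemma smooth_fderiv_apply (hu : Smooth2 u) (v : ℝ × ℝ) :
    ContDiff ℝ (⊤ : ℕ∞) (fun p : ℝ × ℝ => fderiv ℝ (fun q : ℝ × ℝ => u q.1 q.2) p v) :=
  (hu.fderiv_right (m := (⊤:ℕ∞)) (by exact_mod_cast le_top)).clm_apply contDiff_const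

lemma dt (hu : Smooth2 u) : Smooth2 (Dt u) := by
  have h := hu.smooth_fderiv_apply (1, 0)
  have e : (fun p : ℝ × ℝ => Dt u p.1 p.2) = fun p => fderiv ℝ (fun q : ℝ × ℝ => u q.1 q.2) p (1, 0) :=
    funext fun p => hu.Dt_eq_fderiv p.1 p.2
  unfold Smooth2
  rw [e]; exact h

lemma dx (hu : Smooth2 u) : Smooth2 (Dx u) := by
  have h := hu.smooth_fderiv_apply (0, 1)
  have e : (fun p : ℝ × ℝ => Dx u p.1 p.2) = fun p => fderiv ℝ (fun q : ℝ × ℝ => u q.1 q.2) p (0, 1) :=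
    funext fun p => hu.Dx_eq_fderiv p.1 p.2
  unfold Smooth2
  rw [e]; exact h

lemma clairaut (hu : Smooth2 u) (t x : ℝ) : Dt (Dx u) t x = Dx (Dt u) t x := by
  set F := fun p : ℝ × ℝ => u p.1 p.2 with hF
  have hdF : Differentiable ℝ (fderiv ℝ F) :=
    (hu.fderiv_right (m := (⊤:ℕ∞)) (by exact_mod_cast le_top)).differentiable (by simp)
  have key : ∀ v w : ℝ × ℝ,
      fderiv ℝ (fun p => fderiv ℝ F p v) (t, x) w
        = fderiv ℝ (fderiv ℝ F) (t, x) w v := by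
    intro v w
    rw [fderiv_clm_apply (hdF (t, x)) (differentiableAt_const v)]
    simp
  have hsymm : ∀ v w : ℝ × ℝ,
      fderiv ℝ (fderiv ℝ F) (t, x) v w = fderiv ℝ (fderiv ℝ F) (t, x) w v := by
    intro v w
    exact (hu.contDiffAt.isSymmSndFDerivAt (by simp [minSmoothness_of_isRCLikeNormedField]; exact WithTop.coe_le_coe.2 le_top)) v w
  rw [(hu.dx).Dt_eq_fderiv t x, (hu.dt).Dx_eq_fderiv t x]
  have e1 : (fun p : ℝ × ℝ => Dx u p.1 p.2) = fun p => fderiv ℝ F p (0, 1) :=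
    funext fun p => hu.Dx_eq_fderiv p.1 p.2
  have e2 : (fun p : ℝ × ℝ => Dt u p.1 p.2) = fun p => fderiv ℝ F p (1, 0) :=
    funext fun p => hu.Dt_eq_fderiv p.1 p.2
  rw [e1, e2, key, key, hsymm]

end Smooth2

lemma Dt_eq_of_hasDerivAt {f : ℝ → ℝ → ℝ} {t x E : ℝ}
    (h : HasDerivAt (fun s => f s x) E t) : Dt f t x = E := h.deriv

lemma Dx_eq_of_hasDerivAt {f : ℝ → ℝ → ℝ} {t x E : ℝ}
    (h : HasDerivAt (fun s => f t s) E x) : Dx f t x = E := h.deriv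


/-- The multiplier of the conservation law generated by the time-translation
characteristic p = −∂ₜu and the adjoint-symmetry Q = exp(m₂t + m₃x) is
∂ₜQ = m₂Q. -/
theorem stmt_14
    (b c : ℝ → ℝ) (hb : ContDiff ℝ (⊤ : ℕ∞) b) (hc : ContDiff ℝ (⊤ : ℕ∞) c)
    (m₁ m₂ m₃ : ℝ) (hm₁ : m₁ = m₃ ^ 2 - m₂ ^ 2)
    (m B C : ℝ → ℝ)
    (hB : ∀ y, B y = ∫ s in (0:ℝ)..y, b s)
    (hC : ∀ y, C y = ∫ s in (0:ℝ)..y, c s)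
    (hmdef : ∀ y, m y = m₁ * y + m₂ * B y + m₃ * C y)
    (Q : ℝ → ℝ → ℝ) (hQdef : ∀ t x, Q t x = Real.exp (m₂ * t + m₃ * x))
    (u : ℝ → ℝ → ℝ) (hu : Smooth2 u) :
    ∀ t x : ℝ,
      Dt (fun t x =>
          (-(Q t x) * Dt (Dt u) t x - (b (u t x) - m₂) * Q t x * Dt u t x)
            + Q t x * Fop b c m u t x) t x
      + Dx (fun t x =>
          Q t x * Dt (Dx u) t x - (c (u t x) + m₃) * Q t x * Dt u t x) t x
        = m₂ * Q t x * Fop b c m u t x := by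
  -- derivative of Q
  have hq : ∀ t x : ℝ, HasDerivAt (fun s => Q s x) (m₂ * Q t x) t := by
    intro t x
    have h := ((((hasDerivAt_id' (x := t) (𝕜 := ℝ))).const_mul m₂).add_const (m₃ * x)).exp
    have e : (fun s => Q s x) = fun s : ℝ => Real.exp (m₂ * s + m₃ * x) :=
      funext fun s => hQdef s x
    rw [e, hQdef]
    convert h using 1
    ring
  have hqx : ∀ t x : ℝ, HasDerivAt (fun s => Q t s) (m₃ * Q t x) x := by
    intro t x
    have h := ((((hasDerivAt_id' (x := x) (𝕜 := ℝ))).const_mul m₃).const_add (m₂ * t)).exp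
    have e : (fun s => Q t s) = fun s : ℝ => Real.exp (m₂ * t + m₃ * s) :=
      funext fun s => hQdef t s
    rw [e, hQdef]
    convert h using 1
    ring
  -- derivative of m
  have hBd : ∀ y, HasDerivAt B (b y) y := by
    intro y
    have e : B = fun z => ∫ s in (0:ℝ)..z, b s := funext hB
    rw [e]
    exact intervalIntegral.integral_hasDerivAt_right
      (hb.continuous.intervalIntegrable _ _)
      (hb.continuous.stronglyMeasurableAtFilter _ _)
      hb.continuous.continuousAt
  have hCd : ∀ y, HasDerivAt C (c y) y := by
    intro y
    have e : C = fun z => ∫ s in (0:ℝ)..z, c s := funext hC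
    rw [e]
    exact intervalIntegral.integral_hasDerivAt_right
      (hc.continuous.intervalIntegrable _ _)
      (hc.continuous.stronglyMeasurableAtFilter _ _)
      hc.continuous.continuousAt
  have hmd : ∀ y, HasDerivAt m (m₁ + m₂ * b y + m₃ * c y) y := by
    intro y
    have e : m = fun z => m₁ * z + m₂ * B z + m₃ * C z := funext hmdef
    rw [e]
    have h := (((hasDerivAt_id' (x := y) (𝕜 := ℝ)).const_mul m₁).add
      ((hBd y).const_mul m₂)).add ((hCd y).const_mul m₃)
    exact h.congr_deriv (by ring)
  intro t x
  -- one-variable derivative facts at (t, x)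
  have hu1 := hu.hasDerivAt_t t x
  have hu2 := (hu.dt).hasDerivAt_t t x
  have hu3 := ((hu.dt).dt).hasDerivAt_t t x
  have hu4 := (hu.dx).hasDerivAt_t t x
  have hu5 := ((hu.dx).dx).hasDerivAt_t t x
  have hv1 := ((hu.dx).dt).hasDerivAt_x t x
  have hv2 := (hu.dt).hasDerivAt_x t x
  have hv3 := hu.hasDerivAt_x t x
  have hbd : HasDerivAt b (deriv b (u t x)) (u t x) :=
    ((hb.differentiable (by simp)) (u t x)).hasDerivAt
  have hcd : HasDerivAt c (deriv c (u t x)) (u t x) :=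
    ((hc.differentiable (by simp)) (u t x)).hasDerivAt
  have hbu : HasDerivAt (fun s => b (u s x)) (deriv b (u t x) * Dt u t x) t :=
    hbd.comp t hu1
  have hcu : HasDerivAt (fun s => c (u s x)) (deriv c (u t x) * Dt u t x) t :=
    hcd.comp t hu1
  have hcux : HasDerivAt (fun s => c (u t s)) (deriv c (u t x) * Dx u t x) x :=
    hcd.comp x hv3
  have hmu : HasDerivAt (fun s => m (u s x))
      ((m₁ + m₂ * b (u t x) + m₃ * c (u t x)) * Dt u t x) t :=
    (hmd (u t x)).comp t hu1
  have hFop : HasDerivAt (fun s => Fop b c m u s x)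
      ((Dt (Dt (Dt u)) t x - Dt (Dx (Dx u)) t x
        + (deriv b (u t x) * Dt u t x * Dt u t x + b (u t x) * Dt (Dt u) t x)
        + (deriv c (u t x) * Dt u t x * Dx u t x + c (u t x) * Dt (Dx u) t x))
        + (m₁ + m₂ * b (u t x) + m₃ * c (u t x)) * Dt u t x) t := by
    exact (((hu3.sub hu5).add (hbu.mul hu2)).add (hcu.mul hu4)).add hmu
  have hL1 := (((hq t x).neg.mul hu3).sub
      (((hbu.sub_const m₂).mul (hq t x)).mul hu2)).add ((hq t x).mul hFop)
  have hL2 := ((hqx t x).mul hv1).sub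
      (((hcux.add_const m₃).mul (hqx t x)).mul hv2)
  rw [Dt_eq_of_hasDerivAt (f := fun t x =>
        (-(Q t x) * Dt (Dt u) t x - (b (u t x) - m₂) * Q t x * Dt u t x)
          + Q t x * Fop b c m u t x) hL1,
      Dx_eq_of_hasDerivAt (f := fun t x =>
        Q t x * Dt (Dx u) t x - (c (u t x) + m₃) * Q t x * Dt u t x) hL2]
  simp only [Function.comp, Fop, Pi.mul_apply, Pi.neg_apply, Pi.sub_apply, Pi.add_apply]
  rw [hu.clairaut t x, (hu.dx).clairaut t x, hm₁]
  ring
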